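/- arXiv:1707.07133 — 2 statements merged into one kernel-verified Lean document; each statement's English description precedes it below -/
import Mathlib

section
/- Let p be prime, n ≥ 1, and let b₀ < b₁ < … < b_{n-1} be the lower ramification jumps of a totally ramified ℤ/p^n-extension of local fields of residue characteristic p (so all b_l are coprime to p and pairwise congruent mod p). For 0 ≤ t ≤ p^n - 1 write t = ∑_{l=1}^{n} a_{l,t} p^{l-1} with 0 ≤ a_{l,t} ≤ p-1, and set d_t = ⌊( ∑_{l=1}^{n} p^{n-l}(p - 1 + (p-1-a_{l,t})·b_{l-1}) ) / p^n⌋. Then d_t ≥ 1 for 0 ≤ t < p^n - 1, and d_{p^n-1} = 0. -/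
private lemma geom_aux (p : ℕ) (hp : 1 ≤ p) :
    ∀ n, ∑ i ∈ Finset.range n, p ^ i * (p - 1) = p ^ n - 1 := by
  intro n
  induction n with
  | zero => simp
  | succ n ih =>
    rw [Finset.sum_range_succ, ih, pow_succ]
    have h1 : 1 ≤ p ^ n := Nat.one_le_pow _ _ (by omega)
    obtain ⟨q, rfl⟩ : ∃ q, p = 1 + q := ⟨p - 1, by omega⟩
    rw [Nat.mul_add, Nat.mul_one]
    simp only [Nat.add_sub_cancel_left]
    omega

private lemma digit_sum (p : ℕ) (hp : 1 ≤ p) (t : ℕ) :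
    ∀ n, ∑ i ∈ Finset.range n, t / p ^ i % p * p ^ i = t % p ^ n := by
  intro n
  induction n with
  | zero => simp [Nat.mod_one]
  | succ n ih =>
    rw [Finset.sum_range_succ, ih, pow_succ, ← Nat.mod_mul_right_div_self]
    have h := Nat.mod_add_div (t % (p ^ n * p)) (p ^ n)
    have h2 : t % (p ^ n * p) % p ^ n = t % p ^ n := Nat.mod_mod_of_dvd t ⟨p, rfl⟩
    linarith [h, h2]

private lemma key_div_mod (a k : ℕ) (ha : 1 ≤ a) :
    (a * (k + 1) - 1) / a = k ∧ (a * (k + 1) - 1) % a = a - 1 := by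
  have h : a * (k + 1) - 1 = a * k + (a - 1) := by rw [Nat.mul_add, Nat.mul_one]; omega
  rw [h]
  constructor
  · rw [Nat.mul_add_div (by omega), Nat.div_eq_of_lt (by omega)]; omega
  · rw [Nat.mul_add_mod, Nat.mod_eq_of_lt (by omega)]

/-- Arithmetic content of Proposition 3.1(ii): for a prime `p`, `n ≥ 1`, and lower
ramification jumps `b₀,…,b_{n-1} ≥ 1` coprime to `p`, the quantities
`d_t = ⌊(∑_{l=1}^n p^{n-l}(p-1+(p-1-a_{l,t}) b_{l-1}))/p^n⌋`, where `(a_{l,t})` are the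
base-`p` digits of `t`, satisfy `d_t ≥ 1` for `0 ≤ t < p^n - 1` and `d_{p^n-1} = 0`. -/
theorem stmt_8 (p n : ℕ) (hp : p.Prime) (hn : 1 ≤ n)
    (b : Fin n → ℕ) (hb1 : ∀ l, 1 ≤ b l) (hbp : ∀ l, Nat.Coprime (b l) p) :
    let d : ℕ → ℕ := fun t =>
      (∑ l : Fin n, p ^ (n - 1 - (l : ℕ)) *
        ((p - 1) + (p - 1 - t / p ^ (l : ℕ) % p) * b l)) / p ^ n
    (∀ t, t < p ^ n - 1 → 1 ≤ d t) ∧ d (p ^ n - 1) = 0 := by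
  intro d
  have hp1 : 1 ≤ p := hp.one_lt.le
  have hpn : 1 ≤ p ^ n := Nat.one_le_pow _ _ (by omega)
  -- split the sum
  have hsplit : ∀ t, (∑ l : Fin n, p ^ (n - 1 - (l : ℕ)) *
        ((p - 1) + (p - 1 - t / p ^ (l : ℕ) % p) * b l))
      = (p ^ n - 1) + ∑ l : Fin n, p ^ (n - 1 - (l : ℕ)) *
          ((p - 1 - t / p ^ (l : ℕ) % p) * b l) := by
    intro t
    have hgeo : (∑ l : Fin n, p ^ (n - 1 - (l : ℕ)) * (p - 1)) = p ^ n - 1 := by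
      rw [Fin.sum_univ_eq_sum_range (fun l => p ^ (n - 1 - l) * (p - 1)) n,
        ← Finset.sum_range_reflect]
      rw [← geom_aux p hp1 n]
      apply Finset.sum_congr rfl
      intro i hi
      simp only [Finset.mem_range] at hi
      congr 2
      omega
    rw [← hgeo, ← Finset.sum_add_distrib]
    apply Finset.sum_congr rfl
    intro l _
    ring
  constructor
  · intro t ht
    have htn : t < p ^ n := by omega
    -- some digit is < p - 1
    have hdig : ∃ l : Fin n, t / p ^ (l : ℕ) % p < p - 1 := by
      by_contra hcon
      push_neg at hcon
      have hall : ∀ l : Fin n, t / p ^ (l : ℕ) % p = p - 1 := by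
        intro l
        have := Nat.mod_lt (t / p ^ (l : ℕ)) (show 0 < p by omega)
        have := hcon l
        omega
      have := digit_sum p hp1 t n
      rw [Nat.mod_eq_of_lt htn] at this
      have heq : (∑ i ∈ Finset.range n, t / p ^ i % p * p ^ i)
          = ∑ i ∈ Finset.range n, (p - 1) * p ^ i := by
        apply Finset.sum_congr rfl
        intro i hi
        simp only [Finset.mem_range] at hi
        rw [hall ⟨i, hi⟩]
      have hg : (∑ i ∈ Finset.range n, (p - 1) * p ^ i) = p ^ n - 1 := by
        rw [← geom_aux p hp1 n]
        apply Finset.sum_congr rfl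
        intro i _; ring
      omega
    obtain ⟨l, hl⟩ := hdig
    have hterm : 1 ≤ p ^ (n - 1 - (l : ℕ)) * ((p - 1 - t / p ^ (l : ℕ) % p) * b l) := by
      have h1 : 1 ≤ p ^ (n - 1 - (l : ℕ)) := Nat.one_le_pow _ _ (by omega)
      have h2 : 1 ≤ p - 1 - t / p ^ (l : ℕ) % p := by omega
      have h3 := hb1 l
      calc 1 = 1 * (1 * 1) := by ring
        _ ≤ _ := by
          apply Nat.mul_le_mul h1 (Nat.mul_le_mul h2 h3)
    have hsum : 1 ≤ ∑ l : Fin n, p ^ (n - 1 - (l : ℕ)) *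
        ((p - 1 - t / p ^ (l : ℕ) % p) * b l) :=
      le_trans hterm (Finset.single_le_sum (f := fun l : Fin n =>
        p ^ (n - 1 - (l : ℕ)) * ((p - 1 - t / p ^ (l : ℕ) % p) * b l))
        (fun _ _ => Nat.zero_le _) (Finset.mem_univ l))
    show 1 ≤ _ / p ^ n
    rw [Nat.le_div_iff_mul_le (by omega), one_mul, hsplit t]
    omega
  · show (∑ l : Fin n, _) / p ^ n = 0
    rw [hsplit (p ^ n - 1)]
    have hdig : ∀ l : Fin n, (p ^ n - 1) / p ^ (l : ℕ) % p = p - 1 := by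
      intro l
      have hld : (l : ℕ) < n := l.isLt
      have hpl : 1 ≤ p ^ (l : ℕ) := Nat.one_le_pow _ _ (by omega)
      have hpnl : 1 ≤ p ^ (n - (l : ℕ) - 1) := Nat.one_le_pow _ _ (by omega)
      have hfact : p ^ n = p ^ (l : ℕ) * (p * (p ^ (n - (l : ℕ) - 1) - 1 + 1)) := by
        rw [Nat.sub_add_cancel hpnl, ← pow_succ', ← pow_add]
        congr 1; omega
      have h1 : (p ^ n - 1) / p ^ (l : ℕ) = p * (p ^ (n - (l : ℕ) - 1) - 1 + 1) - 1 := by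
        rw [hfact]
        have := key_div_mod (p ^ (l : ℕ)) (p * (p ^ (n - (l : ℕ) - 1) - 1 + 1) - 1) hpl
        rw [Nat.sub_add_cancel (Nat.mul_pos (by omega) (Nat.succ_pos _))] at this
        exact this.1
      rw [h1]
      exact (key_div_mod p (p ^ (n - (l : ℕ) - 1) - 1) (by omega)).2
    have hz : (∑ l : Fin n, p ^ (n - 1 - (l : ℕ)) *
        ((p - 1 - (p ^ n - 1) / p ^ (l : ℕ) % p) * b l)) = 0 := by
      apply Finset.sum_eq_zero
      intro l _
      rw [hdig l]
      simp
    rw [hz, Nat.add_zero]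
    exact Nat.div_eq_of_lt (by omega)
end

section
/- With notation as in the jump formula: for p prime, n ≥ 1, jumps b₀,…,b_{n-1} ≥ 1 coprime to p, and 0 ≤ s < t ≤ p^n - 1 with base-p digit expansions (a_{l,s}), (a_{l,t}), the integers e_s = ∑_{l=1}^{n} a_{l,s}·p^{n-l}·b_{l-1} are pairwise incongruent modulo p^n when the b_l are pairwise congruent mod p and coprime to p; i.e., s ↦ (∑_l a_{l,s} p^{n-l} b_{l-1} mod p^n) is injective on {0,…,p^n-1}. -/
lemma digits_determine (p : ℕ) (hp : 1 < p) :
    ∀ n s t, s < p ^ n → t < p ^ n → (∀ l < n, s / p ^ l % p = t / p ^ l % p) → s = t := by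
  intro n
  induction n with
  | zero => intro s t hs ht _; simp only [pow_zero, Nat.lt_one_iff] at hs ht; omega
  | succ n ih =>
    intro s t hs ht h
    have h0 : s % p = t % p := by simpa using h 0 (Nat.succ_pos n)
    have hrec : s / p = t / p := by
      apply ih
      · exact Nat.div_lt_of_lt_mul (by rw [← pow_succ'] ; exact hs)
      · exact Nat.div_lt_of_lt_mul (by rw [← pow_succ'] ; exact ht)
      · intro l hl
        have := h (l + 1) (by omega)
        simpa [Nat.div_div_eq_div_mul, pow_succ'] using this
    rw [← Nat.div_add_mod s p, ← Nat.div_add_mod t p, h0, hrec]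

lemma key_cancel (p : ℕ) (hp : 0 < p) :
    ∀ k (B c d : ℕ → ℕ), (∀ j, Nat.Coprime (B j) p) → (∀ j, c j < p) → (∀ j, d j < p) →
      (∑ j ∈ Finset.range k, c j * p ^ j * B j) ≡
        (∑ j ∈ Finset.range k, d j * p ^ j * B j) [MOD p ^ k] →
      ∀ j < k, c j = d j := by
  intro k
  induction k with
  | zero => intro B c d _ _ _ _ j hj; omega
  | succ k ih =>
    intro B c d hB hc hd hmod j hj
    set Sc := ∑ j ∈ Finset.range k, c (j + 1) * p ^ j * B (j + 1) with hSc
    set Sd := ∑ j ∈ Finset.range k, d (j + 1) * p ^ j * B (j + 1) with hSd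
    have hsplit : ∀ (c' : ℕ → ℕ) (S : ℕ), S = ∑ j ∈ Finset.range k, c' (j + 1) * p ^ j * B (j + 1) →
        (∑ j ∈ Finset.range (k + 1), c' j * p ^ j * B j) = p * S + c' 0 * B 0 := by
      intro c' S hS
      rw [Finset.sum_range_succ', hS, Finset.mul_sum]
      congr 1
      · apply Finset.sum_congr rfl; intro j _; ring
      · ring
    rw [hsplit c Sc hSc, hsplit d Sd hSd] at hmod
    -- first digit
    have h0 : c 0 = d 0 := by
      have hmp : (p * Sc + c 0 * B 0) ≡ (p * Sd + d 0 * B 0) [MOD p] :=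
        hmod.of_dvd (dvd_pow_self p (Nat.succ_ne_zero k))
      have h1 : c 0 * B 0 ≡ d 0 * B 0 [MOD p] := by
        have h2 : (p * Sc + c 0 * B 0) ≡ (0 + c 0 * B 0) [MOD p] :=
          Nat.ModEq.add_right _ ((Nat.modEq_zero_iff_dvd).2 ⟨Sc, rfl⟩)
        have h3 : (p * Sd + d 0 * B 0) ≡ (0 + d 0 * B 0) [MOD p] :=
          Nat.ModEq.add_right _ ((Nat.modEq_zero_iff_dvd).2 ⟨Sd, rfl⟩)
        calc c 0 * B 0 = 0 + c 0 * B 0 := by ring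
          _ ≡ p * Sc + c 0 * B 0 [MOD p] := h2.symm
          _ ≡ p * Sd + d 0 * B 0 [MOD p] := hmp
          _ ≡ 0 + d 0 * B 0 [MOD p] := h3
          _ = d 0 * B 0 := by ring
      have h4 : c 0 ≡ d 0 [MOD p] := h1.cancel_right_of_coprime (hB 0).symm
      have := hc 0; have := hd 0
      calc c 0 = c 0 % p := (Nat.mod_eq_of_lt (hc 0)).symm
        _ = d 0 % p := h4
        _ = d 0 := Nat.mod_eq_of_lt (hd 0)
    -- inner sums
    have hS : Sc ≡ Sd [MOD p ^ k] := by
      have hcan : p * Sc ≡ p * Sd [MOD p ^ (k + 1)] := by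
        rw [h0] at hmod
        exact hmod.add_right_cancel' _
      have : (p * Sc) % (p * p ^ k) = (p * Sd) % (p * p ^ k) := by
        rw [← pow_succ']; exact hcan
      rw [Nat.mul_mod_mul_left, Nat.mul_mod_mul_left] at this
      exact Nat.eq_of_mul_eq_mul_left hp this
    have hrest := ih (fun j => B (j + 1)) (fun j => c (j + 1)) (fun j => d (j + 1))
      (fun j => hB (j + 1)) (fun j => hc (j + 1)) (fun j => hd (j + 1)) hS
    rcases j with _ | j
    · exact h0
    · exact hrest j (by omega)

/-- Key injectivity step in the proof of Proposition 3.1: for a prime `p`, `n ≥ 1`, and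
jumps `b₀,…,b_{n-1} ≥ 1` coprime to `p` and pairwise congruent mod `p`, the map
`s ↦ ∑_l a_{l,s} p^{n-l} b_{l-1} mod p^n` (with `(a_{l,s})` the base-`p` digits of `s`)
is injective on `{0,…,p^n-1}`. -/
theorem stmt_9 (p n : ℕ) (hp : p.Prime) (hn : 1 ≤ n)
    (b : Fin n → ℕ) (hb1 : ∀ l, 1 ≤ b l) (hbp : ∀ l, Nat.Coprime (b l) p)
    (hcong : ∀ l l', b l % p = b l' % p) :
    ∀ s t, s < p ^ n → t < p ^ n →
      (∑ l : Fin n, (s / p ^ (l : ℕ) % p) * p ^ (n - 1 - (l : ℕ)) * b l) ≡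
        (∑ l : Fin n, (t / p ^ (l : ℕ) % p) * p ^ (n - 1 - (l : ℕ)) * b l) [MOD p ^ n] →
      s = t := by
  intro s t hs ht hmod
  have hp1 : 1 < p := hp.one_lt
  have hp0 : 0 < p := hp.pos
  set B : ℕ → ℕ := fun j => b ⟨n - 1 - j, by omega⟩ with hB
  have hreindex : ∀ u : ℕ, (∑ l : Fin n, (u / p ^ (l : ℕ) % p) * p ^ (n - 1 - (l : ℕ)) * b l)
      = ∑ j ∈ Finset.range n, (u / p ^ (n - 1 - j) % p) * p ^ j * B j := by
    intro u
    have h1 : (∑ l : Fin n, (u / p ^ (l : ℕ) % p) * p ^ (n - 1 - (l : ℕ)) * b l)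
        = ∑ l ∈ Finset.range n,
            if h : l < n then (u / p ^ l % p) * p ^ (n - 1 - l) * b ⟨l, h⟩ else 0 := by
      rw [← Fin.sum_univ_eq_sum_range]
      refine Finset.sum_congr rfl fun l _ => ?_
      rw [dif_pos l.isLt]
    rw [h1, ← Finset.sum_range_reflect]
    apply Finset.sum_congr rfl
    intro j hj
    simp only [Finset.mem_range] at hj
    rw [dif_pos (show n - 1 - j < n by omega)]
    have h2 : n - 1 - (n - 1 - j) = j := by omega
    rw [h2]
  rw [hreindex s, hreindex t] at hmod
  have hdig := key_cancel p hp0 n B (fun j => s / p ^ (n - 1 - j) % p)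
    (fun j => t / p ^ (n - 1 - j) % p)
    (fun j => hbp _) (fun j => Nat.mod_lt _ hp0) (fun j => Nat.mod_lt _ hp0) hmod
  apply digits_determine p hp1 n s t hs ht
  intro l hl
  have := hdig (n - 1 - l) (by omega)
  simpa [show n - 1 - (n - 1 - l) = l by omega] using this
end
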